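/- arXiv:1010.2257 — 3 statements merged into one kernel-verified Lean document; each statement's English description precedes it below -/
import Mathlib

section
/- Let G be a finite simple graph on vertex set {1,…,n} that has a generic vertex, i.e. a vertex v such that the only automorphism of G fixing v is the identity. Then a subgroup Γ ≤ Γ0 = Aut(G) × Z2 is an isotropy subgroup of the Γ0-action on ℝ^n (i.e. Γ = Sym(u) for some u ∈ ℝ^n) if and only if Γ = Γ0 or −1 ∉ Γ. -/
open Matrix

/-- The automorphism group of a graph `G` on vertex set `Fin n`,
as a subgroup of the permutation group. -/
def autSubgroup {n : ℕ} (G : SimpleGraph (Fin n)) : Subgroup (Equiv.Perm (Fin n)) where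
  carrier := {π | ∀ i j, G.Adj (π i) (π j) ↔ G.Adj i j}
  one_mem' := fun i j => Iff.rfl
  mul_mem' := fun {a b} ha hb i j => (ha (b i) (b j)).trans (hb i j)
  inv_mem' := by
    intro a ha i j
    have h := ha (a⁻¹ i) (a⁻¹ j)
    simpa using h.symm

/-- `Γ0 = Aut(G) × Z2`, with `Z2 = {1,-1} = ℤˣ` written multiplicatively. -/
def Gamma0 {n : ℕ} (G : SimpleGraph (Fin n)) : Subgroup (Equiv.Perm (Fin n) × ℤˣ) :=
  (autSubgroup G).prod ⊤

/-- The action of `Γ0` on `ℝ^n`: `((π,β)·u)_i = β * u (π⁻¹ i)`. -/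
def act {n : ℕ} (γ : Equiv.Perm (Fin n) × ℤˣ) (u : Fin n → ℝ) : Fin n → ℝ :=
  fun i => ((γ.2 : ℤ) : ℝ) * u (γ.1⁻¹ i)

theorem stmt0 {n : ℕ} (G : SimpleGraph (Fin n)) (v : Fin n)
    (hgen : ∀ π : Equiv.Perm (Fin n), π ∈ autSubgroup G → π v = v → π = 1)
    (Γ : Subgroup (Equiv.Perm (Fin n) × ℤˣ)) (hΓ : Γ ≤ Gamma0 G) :
    (∃ u : Fin n → ℝ, (Γ : Set (Equiv.Perm (Fin n) × ℤˣ)) =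
        {γ | γ ∈ Gamma0 G ∧ act γ u = u}) ↔
      (Γ = Gamma0 G ∨ ((1 : Equiv.Perm (Fin n)), (-1 : ℤˣ)) ∉ Γ) := by
  classical
  constructor
  · rintro ⟨u, hu⟩
    by_cases hneg : ((1 : Equiv.Perm (Fin n)), (-1 : ℤˣ)) ∈ Γ
    · left
      have hmem : ((1 : Equiv.Perm (Fin n)), (-1 : ℤˣ)) ∈
          {γ | γ ∈ Gamma0 G ∧ act γ u = u} := by
        rw [← hu]; exact hneg
      have hu0 : u = 0 := by
        funext i
        have h := congrFun hmem.2 i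
        simp only [Pi.zero_apply]
        simp [act] at h
        linarith
      apply le_antisymm hΓ
      intro γ hγ
      have hγm : γ ∈ {γ | γ ∈ Gamma0 G ∧ act γ u = u} :=
        ⟨hγ, by funext i; simp [act, hu0]⟩
      rw [← hu] at hγm
      exact hγm
    · right; exact hneg
  · rintro (rfl | hneg)
    · refine ⟨0, ?_⟩
      ext γ
      constructor
      · intro h
        exact ⟨h, funext fun i => by simp [act]⟩
      · exact fun h => h.1
    · -- key uniqueness lemma
      have uniq : ∀ γ δ : Equiv.Perm (Fin n) × ℤˣ, γ ∈ Γ → δ ∈ Γ →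
          γ.1 v = δ.1 v → γ = δ := by
        intro γ δ hγ hδ hv
        have hη : δ⁻¹ * γ ∈ Γ := mul_mem (inv_mem hδ) hγ
        have hη1 : (δ⁻¹ * γ).1 ∈ autSubgroup G := (hΓ hη).1
        have hηv : (δ⁻¹ * γ).1 v = v := by
          simp only [Prod.fst_mul, Prod.fst_inv, Equiv.Perm.mul_apply, hv]
          exact Equiv.symm_apply_apply _ _
        have h1 : (δ⁻¹ * γ).1 = 1 := hgen _ hη1 hηv
        rcases Int.units_eq_one_or (δ⁻¹ * γ).2 with h2 | h2
        · have : δ⁻¹ * γ = 1 := Prod.ext h1 h2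
          have := (mul_eq_one_iff_inv_eq.mp this)
          simpa using this.symm
        · exfalso
          apply hneg
          have : δ⁻¹ * γ = ((1 : Equiv.Perm (Fin n)), (-1 : ℤˣ)) := Prod.ext h1 h2
          rw [← this]; exact hη
      set u : Fin n → ℝ := fun i =>
        if h : ∃ γ : Equiv.Perm (Fin n) × ℤˣ, γ ∈ Γ ∧ γ.1 v = i
        then ((h.choose.2 : ℤ) : ℝ) else 0 with hu_def
      have huval : ∀ γ : Equiv.Perm (Fin n) × ℤˣ, γ ∈ Γ →
          u (γ.1 v) = ((γ.2 : ℤ) : ℝ) := by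
        intro γ hγ
        have h : ∃ δ : Equiv.Perm (Fin n) × ℤˣ, δ ∈ Γ ∧ δ.1 v = γ.1 v :=
          ⟨γ, hγ, rfl⟩
        have : u (γ.1 v) = ((h.choose.2 : ℤ) : ℝ) := by
          simp only [hu_def]; rw [dif_pos h]
        rw [this, uniq h.choose γ h.choose_spec.1 hγ h.choose_spec.2]
      have huval0 : ∀ i : Fin n,
          (¬ ∃ γ : Equiv.Perm (Fin n) × ℤˣ, γ ∈ Γ ∧ γ.1 v = i) → u i = 0 := by
        intro i h
        simp only [hu_def]; rw [dif_neg h]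
      refine ⟨u, ?_⟩
      ext γ0
      constructor
      · -- Γ ⊆ Sym(u)
        intro hγ0
        refine ⟨hΓ hγ0, funext fun i => ?_⟩
        by_cases h : ∃ δ : Equiv.Perm (Fin n) × ℤˣ, δ ∈ Γ ∧ δ.1 v = γ0.1⁻¹ i
        · obtain ⟨δ, hδ, hδv⟩ := h
          have hmul : γ0 * δ ∈ Γ := mul_mem hγ0 hδ
          have hmulv : (γ0 * δ).1 v = i := by
            simp only [Prod.fst_mul, Equiv.Perm.mul_apply, hδv]
            exact Equiv.apply_symm_apply _ _
          have h1 : u i = (((γ0 * δ).2 : ℤ) : ℝ) := by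
            rw [← hmulv]; exact huval _ hmul
          have h2 : u (γ0.1⁻¹ i) = ((δ.2 : ℤ) : ℝ) := by
            rw [← hδv]; exact huval _ hδ
          simp only [act, h1, h2, Prod.snd_mul]
          push_cast
          ring
        · have h1 : u (γ0.1⁻¹ i) = 0 := huval0 _ h
          have h2 : u i = 0 := by
            apply huval0
            rintro ⟨δ, hδ, hδv⟩
            apply h
            refine ⟨γ0⁻¹ * δ, mul_mem (inv_mem hγ0) hδ, ?_⟩
            simp only [Prod.fst_mul, Prod.fst_inv, Equiv.Perm.mul_apply, hδv]
          simp only [act, h1, h2, mul_zero]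
      · -- Sym(u) ⊆ Γ
        rintro ⟨hγ0, hact⟩
        have huv : u v = 1 := by
          have := huval 1 (one_mem Γ)
          simpa using this
        have hval : u (γ0.1 v) = ((γ0.2 : ℤ) : ℝ) := by
          have h := congrFun hact (γ0.1 v)
          simp only [act, Equiv.Perm.coe_inv, Equiv.symm_apply_apply, huv, mul_one] at h
          exact h.symm
        have hex : ∃ δ : Equiv.Perm (Fin n) × ℤˣ, δ ∈ Γ ∧ δ.1 v = γ0.1 v := by
          by_contra h
          have := huval0 _ h
          rw [hval] at this
          rcases Int.units_eq_one_or γ0.2 with h2 | h2 <;> rw [h2] at this <;>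
            norm_num at this
        obtain ⟨δ, hδ, hδv⟩ := hex
        have hδval : u (γ0.1 v) = ((δ.2 : ℤ) : ℝ) := by
          rw [← hδv]; exact huval _ hδ
        have hsnd : γ0.2 = δ.2 := by
          rw [hval] at hδval
          rcases Int.units_eq_one_or γ0.2 with h2 | h2 <;>
            rcases Int.units_eq_one_or δ.2 with h3 | h3 <;>
            rw [h2, h3] at hδval ⊢ <;> first | norm_num at hδval ⊢ | norm_num at hδval
        have hfst : γ0.1 = δ.1 := by
          have hη : δ.1⁻¹ * γ0.1 ∈ autSubgroup G :=
            mul_mem (inv_mem (hΓ hδ).1) hγ0.1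
          have hηv : (δ.1⁻¹ * γ0.1) v = v := by
            simp only [Equiv.Perm.mul_apply, hδv.symm]
            exact Equiv.symm_apply_apply _ _
          have := hgen _ hη hηv
          have := mul_eq_one_iff_inv_eq.mp this
          simpa using this.symm
        have : γ0 = δ := Prod.ext hfst hsnd
        rw [this]
        exact hδ
end

section
/- Let G be a finite simple graph on vertex set {1,…,n} with a generic vertex v1, and let u ∈ ℝ^n be the standard basis vector e_{v1} (u_{v1} = 1, u_i = 0 for i ≠ v1). Then for every subgroup Γ ≤ Γ0 = Aut(G) × Z2 with −1 ∉ Γ, the vector w = Σ_{γ ∈ Γ} γ·u satisfies Sym(w) = Γ. -/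
open Matrix

theorem stmt1 {n : ℕ} (G : SimpleGraph (Fin n)) (v1 : Fin n)
    (hgen : ∀ π : Equiv.Perm (Fin n), π ∈ autSubgroup G → π v1 = v1 → π = 1)
    (u : Fin n → ℝ) (hu : u = fun i => if i = v1 then 1 else 0)
    (Γ : Subgroup (Equiv.Perm (Fin n) × ℤˣ)) (hΓ : Γ ≤ Gamma0 G)
    (hneg : ((1 : Equiv.Perm (Fin n)), (-1 : ℤˣ)) ∉ Γ)
    (w : Fin n → ℝ)
    (hw : w = ∑ᶠ γ ∈ (Γ : Set (Equiv.Perm (Fin n) × ℤˣ)), act γ u) :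
    {γ | γ ∈ Gamma0 G ∧ act γ w = w} = (Γ : Set (Equiv.Perm (Fin n) × ℤˣ)) := by
  -- Elements of Γ with the same first component value at v1 are equal.
  have htriv : ∀ γ ∈ Γ, γ.1 v1 = v1 → γ = 1 := by
    intro γ hγ hfix
    have hmem := hΓ hγ
    rw [Gamma0, Subgroup.mem_prod] at hmem
    have h1 : γ.1 = 1 := hgen γ.1 hmem.1 hfix
    rcases Int.units_eq_one_or γ.2 with h2 | h2
    · exact Prod.ext h1 h2
    · exfalso
      apply hneg
      have : γ = ((1 : Equiv.Perm (Fin n)), (-1 : ℤˣ)) := Prod.ext h1 h2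
      rwa [this] at hγ
  have uniq : ∀ γ ∈ Γ, ∀ δ ∈ Γ, γ.1 v1 = δ.1 v1 → γ = δ := by
    intro γ hγ δ hδ h
    have hmem : δ⁻¹ * γ ∈ Γ := mul_mem (inv_mem hδ) hγ
    have hfix : (δ⁻¹ * γ).1 v1 = v1 := by
      have : (δ⁻¹ * γ).1 = δ.1⁻¹ * γ.1 := rfl
      rw [this]
      simp [Equiv.Perm.mul_apply, h]
    have h2 := htriv _ hmem hfix
    rw [inv_mul_eq_one] at h2
    exact h2.symm
  -- finite set version of the sum
  have hfin : (Γ : Set (Equiv.Perm (Fin n) × ℤˣ)).Finite := Set.toFinite _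
  have hw' : w = ∑ γ ∈ hfin.toFinset, act γ u := by
    rw [hw, ← finsum_mem_coe_finset, Set.Finite.coe_toFinset]
  have mem_s : ∀ γ, γ ∈ hfin.toFinset ↔ γ ∈ Γ := fun γ => Set.Finite.mem_toFinset hfin
  -- value of w at the orbit of v1
  have wval : ∀ (i : Fin n) (γ : Equiv.Perm (Fin n) × ℤˣ), γ ∈ Γ → γ.1 v1 = i →
      w i = ((γ.2 : ℤ) : ℝ) := by
    intro i γ hγ hi
    rw [hw']
    rw [Finset.sum_apply]
    rw [Finset.sum_eq_single γ]
    · have : γ.1⁻¹ i = v1 := by rw [← hi]; simp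
      simp [act, this, hu]
    · intro δ hδ hne
      have hδΓ : δ ∈ Γ := (mem_s δ).1 hδ
      by_contra hne0
      have : u (δ.1⁻¹ i) ≠ 0 := by
        intro h0
        apply hne0
        simp only [Equiv.Perm.inv_def] at h0
        simp [act, h0]
      have hδv : δ.1⁻¹ i = v1 := by
        rw [hu] at this
        by_contra hc
        simp only [Equiv.Perm.inv_def] at hc
        simp [hc] at this
      have : δ.1 v1 = i := by rw [← hδv]; simp
      exact hne (uniq δ hδΓ γ hγ (this.trans hi.symm))
    · intro hc
      exact absurd ((mem_s γ).2 hγ) hc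
  have wzero : ∀ i : Fin n, (∀ γ ∈ Γ, γ.1 v1 ≠ i) → w i = 0 := by
    intro i hi
    rw [hw', Finset.sum_apply]
    apply Finset.sum_eq_zero
    intro γ hγ
    have hγΓ : γ ∈ Γ := (mem_s γ).1 hγ
    have : γ.1⁻¹ i ≠ v1 := by
      intro h
      apply hi γ hγΓ
      rw [← h]; simp
    simp only [Equiv.Perm.inv_def] at this
    simp [act, hu, this]
  have wv1 : w v1 = 1 := by
    have := wval v1 1 (one_mem Γ) (by simp)
    simpa using this
  ext γ'
  simp only [Set.mem_setOf_eq, SetLike.mem_coe]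
  constructor
  · rintro ⟨hγ'0, hact⟩
    have h1 : act γ' w (γ'.1 v1) = w (γ'.1 v1) := congrFun hact _
    have h2 : act γ' w (γ'.1 v1) = ((γ'.2 : ℤ) : ℝ) := by
      simp [act, wv1]
    have hne : w (γ'.1 v1) ≠ 0 := by
      rw [← h1, h2]
      exact_mod_cast γ'.2.ne_zero
    -- there is γ ∈ Γ with γ.1 v1 = γ'.1 v1
    have hex : ∃ γ ∈ Γ, γ.1 v1 = γ'.1 v1 := by
      by_contra hc
      push_neg at hc
      exact hne (wzero _ hc)
    obtain ⟨γ, hγ, heq⟩ := hex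
    have hval := wval _ γ hγ heq
    have hβ : γ.2 = γ'.2 := by
      have hc : ((γ.2 : ℤ) : ℝ) = ((γ'.2 : ℤ) : ℝ) := by
        rw [← hval, ← h1, h2]
      exact Units.ext (by exact_mod_cast hc)
    -- γ'⁻¹ * γ ∈ Γ0 fixes v1 and has trivial sign, so γ' = γ
    have hmem0 : γ'⁻¹ * γ ∈ Gamma0 G := mul_mem (inv_mem hγ'0) (hΓ hγ)
    rw [Gamma0, Subgroup.mem_prod] at hmem0
    have hfix : (γ'⁻¹ * γ).1 v1 = v1 := by
      have : (γ'⁻¹ * γ).1 = γ'.1⁻¹ * γ.1 := rfl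
      rw [this]
      simp [Equiv.Perm.mul_apply, heq]
    have hp1 : (γ'⁻¹ * γ).1 = 1 := hgen _ hmem0.1 hfix
    have hp2 : (γ'⁻¹ * γ).2 = 1 := by
      have : (γ'⁻¹ * γ).2 = γ'.2⁻¹ * γ.2 := rfl
      rw [this, hβ, inv_mul_cancel]
    have : γ'⁻¹ * γ = 1 := Prod.ext hp1 hp2
    rw [inv_mul_eq_one] at this
    rw [this]
    exact hγ
  · intro hγ'
    refine ⟨hΓ hγ', ?_⟩
    funext i
    by_cases hex : ∃ δ ∈ Γ, δ.1 v1 = i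
    · obtain ⟨δ, hδ, hδi⟩ := hex
      have hmem : γ'⁻¹ * δ ∈ Γ := mul_mem (inv_mem hγ') hδ
      have hδ' : (γ'⁻¹ * δ).1 v1 = γ'.1⁻¹ i := by
        have : (γ'⁻¹ * δ).1 = γ'.1⁻¹ * δ.1 := rfl
        rw [this]
        simp [Equiv.Perm.mul_apply, hδi]
      have h1 := wval _ _ hmem hδ'
      have h2 := wval _ _ hδ hδi
      have hsnd : (γ'⁻¹ * δ).2 = γ'.2⁻¹ * δ.2 := rfl
      rw [act, h1, h2, hsnd]
      rcases Int.units_eq_one_or γ'.2 with h | h <;> rcases Int.units_eq_one_or δ.2 with h' | h' <;>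
        simp [h, h']
    · push_neg at hex
      have h1 : w i = 0 := wzero i hex
      have h2 : w (γ'.1⁻¹ i) = 0 := by
        apply wzero
        intro δ hδ hc
        apply hex (γ' * δ) (mul_mem hγ' hδ)
        have : (γ' * δ).1 = γ'.1 * δ.1 := rfl
        rw [this]
        simp [Equiv.Perm.mul_apply, hc]
      rw [act, h1, h2, mul_zero]
end

section
/- Let a finite group Γ0 act linearly on V = ℝ^n. For a subgroup Γ ≤ Γ0, let Fix(Γ) = {u ∈ V : γ·u = u for all γ ∈ Γ} and pstab(Fix(Γ)) = {γ ∈ Γ0 : γ·u = u for all u ∈ Fix(Γ)}. Then Γ is an isotropy subgroup of the action (i.e. Γ = {γ ∈ Γ0 : γ·u = u} for some u ∈ V) if and only if pstab(Fix(Γ)) = Γ. -/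
theorem stmt10 {n : ℕ} (Γ0 : Type) [Group Γ0] [Finite Γ0]
    (ρ : Representation ℝ Γ0 (Fin n → ℝ)) (Γ : Subgroup Γ0) :
    (∃ u : Fin n → ℝ, (Γ : Set Γ0) = {γ | ρ γ u = u}) ↔
      {γ : Γ0 | ∀ u : Fin n → ℝ, (∀ δ ∈ Γ, ρ δ u = u) → ρ γ u = u} = (Γ : Set Γ0) := by
  constructor
  · rintro ⟨u, hu⟩
    ext γ
    constructor
    · intro hγ
      rw [hu]
      exact hγ u (fun δ hδ => by
        have : δ ∈ {γ | ρ γ u = u} := hu ▸ hδ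
        exact this)
    · intro hγ v hv
      exact hv γ hγ
  · intro hps
    classical
    haveI := Fintype.ofFinite Γ0
    -- Fixed subspace of Γ
    set F : Submodule ℝ (Fin n → ℝ) := ⨅ δ ∈ Γ, LinearMap.ker (ρ δ - LinearMap.id) with hF
    have memF : ∀ v : Fin n → ℝ, v ∈ F ↔ ∀ δ ∈ Γ, ρ δ v = v := by
      intro v
      simp only [hF, Submodule.mem_iInf, LinearMap.mem_ker, LinearMap.sub_apply,
        LinearMap.id_apply, sub_eq_zero]
    -- For γ ∉ Γ, the set of fixed points of γ inside F is a proper subspace of F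
    set q : Γ0 → Subspace ℝ F := fun γ =>
      LinearMap.ker ((ρ γ - LinearMap.id).comp F.subtype) with hq
    have hqne : ∀ γ ∉ Γ, q γ ≠ ⊤ := by
      intro γ hγ htop
      apply hγ
      have : γ ∈ (Γ : Set Γ0) := by
        rw [← hps]
        intro v hv
        have hvF : v ∈ F := (memF v).2 hv
        have : (⟨v, hvF⟩ : F) ∈ q γ := htop ▸ Submodule.mem_top
        simpa only [hq, LinearMap.mem_ker, LinearMap.comp_apply, Submodule.coe_subtype,
          LinearMap.sub_apply, LinearMap.id_apply, sub_eq_zero] using this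
      exact this
    set s : Finset (Subspace ℝ F) :=
      (Finset.univ.filter (fun γ : Γ0 => γ ∉ Γ)).image q with hs
    have htopns : ⊤ ∉ s := by
      intro h
      rw [hs] at h
      obtain ⟨γ, hγ, hqγ⟩ := Finset.mem_image.1 h
      exact hqne γ (Finset.mem_filter.1 hγ).2 hqγ
    have hne := Subspace.biUnion_ne_univ_of_top_notMem htopns
    rw [Set.ne_univ_iff_exists_notMem] at hne
    obtain ⟨x, hx⟩ := hne
    simp only [Set.mem_iUnion, not_exists] at hx
    refine ⟨(x : Fin n → ℝ), ?_⟩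
    ext γ
    constructor
    · intro hγ
      exact (memF x).1 x.2 γ hγ
    · intro hγ
      by_contra hγΓ
      have hγs : q γ ∈ s := by
        rw [hs]
        exact Finset.mem_image.2 ⟨γ, Finset.mem_filter.2 ⟨Finset.mem_univ _, hγΓ⟩, rfl⟩
      apply hx (q γ) hγs
      simp only [hq, SetLike.mem_coe, LinearMap.mem_ker, LinearMap.comp_apply,
        Submodule.coe_subtype, LinearMap.sub_apply, LinearMap.id_apply, sub_eq_zero]
      exact hγ
end
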